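/- The HWSD-optimal allocation is doctor-strategyproof: fix matroid rank valuations for the hospitals and strict complete preference orders for the doctors, and let X be the HWSD-optimal allocation. For any doctor d_i and any alternative strict complete preference order ≻', let Y be the HWSD-optimal allocation for the profile in which d_i's order is replaced by ≻' (all else unchanged). Then X(d_i) is weakly preferred to Y(d_i) according to d_i's true order: either X(d_i) = Y(d_i) or X(d_i) ≻_{d_i} Y(d_i). -/
import Mathlib


open Finset

/-- A matroid rank function on subsets of a finite ground set. -/
def IsMRF {α : Type*} [DecidableEq α] (v : Finset α → ℤ) : Prop :=
  v ∅ = 0 ∧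
  (∀ (S : Finset α) (d : α), d ∉ S →
    v (insert d S) - v S = 0 ∨ v (insert d S) - v S = 1) ∧
  (∀ (S T : Finset α) (d : α), S ⊆ T → d ∉ T →
    v (insert d T) - v T ≤ v (insert d S) - v S)

/-- The bundle of doctors assigned to hospital `h` under allocation `X`. -/
def bundle {n m : ℕ} (X : Fin m → Option (Fin n)) (h : Fin n) : Finset (Fin m) :=
  Finset.univ.filter (fun d => X d = some h)

/-- An allocation is non-redundant if every hospital's bundle is independent. -/
def NonRedundant {n m : ℕ} (v : Fin n → Finset (Fin m) → ℤ)
    (X : Fin m → Option (Fin n)) : Prop :=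
  ∀ h, v h (bundle X h) = (bundle X h).card

/-- Hospital utilitarian welfare. -/
def USW {n m : ℕ} (v : Fin n → Finset (Fin m) → ℤ) (X : Fin m → Option (Fin n)) : ℤ :=
  ∑ h, v h (bundle X h)

/-- Doctor `d` strictly prefers the first outcome to the second; every hospital is
strictly preferred to being unallocated (`none`). -/
def OptStrictPref {n m : ℕ} (P : Fin m → Fin n → Fin n → Prop) (d : Fin m) :
    Option (Fin n) → Option (Fin n) → Prop
  | some h, some h' => P d h h'
  | some _, none => True
  | none, _ => False

/-- `(h, S)` is a blocking pair for `X`. -/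
def IsBlockingPair {n m : ℕ} (v : Fin n → Finset (Fin m) → ℤ)
    (P : Fin m → Fin n → Fin n → Prop) (X : Fin m → Option (Fin n))
    (h : Fin n) (S : Finset (Fin m)) : Prop :=
  v h S = S.card ∧ v h (bundle X h) < v h S ∧
    ∀ d ∈ S, X d = some h ∨ OptStrictPref P d (some h) (X d)

/-- An allocation is stable if it is non-redundant and admits no blocking pair. -/
def Stable {n m : ℕ} (v : Fin n → Finset (Fin m) → ℤ)
    (P : Fin m → Fin n → Fin n → Prop) (X : Fin m → Option (Fin n)) : Prop :=
  NonRedundant v X ∧ ¬ ∃ h S, IsBlockingPair v P X h S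

/-- The HWSD ordering on non-redundant allocations: `X` beats `Y`. -/
def HWSDgt {n m : ℕ} (v : Fin n → Finset (Fin m) → ℤ)
    (P : Fin m → Fin n → Fin n → Prop) (X Y : Fin m → Option (Fin n)) : Prop :=
  USW v Y < USW v X ∨
  (USW v X = USW v Y ∧ ∃ j : Fin m,
    OptStrictPref P j (X j) (Y j) ∧ ∀ k : Fin m, k < j → X k = Y k)

/-- `X` is the HWSD-optimal allocation: the greatest non-redundant allocation in the
HWSD ordering (the output of the High Welfare Serial Dictatorship mechanism). -/
def IsHWSDOpt {n m : ℕ} (v : Fin n → Finset (Fin m) → ℤ)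
    (P : Fin m → Fin n → Fin n → Prop) (X : Fin m → Option (Fin n)) : Prop :=
  NonRedundant v X ∧ ∀ Y, NonRedundant v Y → Y ≠ X → HWSDgt v P X Y

lemma optSP_not_both {n m : ℕ} {P Q : Fin m → Fin n → Fin n → Prop} {d e : Fin m}
    (hPQ : ∀ x y, P d x y → Q e y x → False) :
    ∀ a b, OptStrictPref P d a b → OptStrictPref Q e b a → False := by
  intro a b h1 h2
  cases a with
  | none => exact h1
  | some h =>
    cases b with
    | none => exact h2
    | some h' => exact hPQ h h' h1 h2

/-- The HWSD mechanism is doctor-strategyproof: no doctor can obtain a strictly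
preferred hospital (according to its true order) by misreporting its preferences. -/
theorem hwsd_doctor_sp {n m : ℕ} (v : Fin n → Finset (Fin m) → ℤ)
    (P : Fin m → Fin n → Fin n → Prop)
    (hv : ∀ h, IsMRF (v h)) (hP : ∀ d, IsStrictTotalOrder (Fin n) (P d))
    (i : Fin m) (P' : Fin n → Fin n → Prop) (hP' : IsStrictTotalOrder (Fin n) P')
    (X Y : Fin m → Option (Fin n))
    (hX : IsHWSDOpt v P X) (hY : IsHWSDOpt v (Function.update P i P') Y) :
    X i = Y i ∨ OptStrictPref P i (X i) (Y i) := by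
  have asymP : ∀ d : Fin m, ∀ x y, P d x y → P d y x → False := by
    intro d x y h1 h2
    haveI := hP d
    exact irrefl_of (P d) x (trans_of (P d) h1 h2)
  have asymU : ∀ d : Fin m, ∀ x y,
      Function.update P i P' d x y → Function.update P i P' d y x → False := by
    intro d x y h1 h2
    by_cases hd : d = i
    · subst hd
      rw [Function.update_self] at h1 h2
      haveI := hP'
      exact irrefl_of P' x (trans_of P' h1 h2)
    · rw [Function.update_of_ne hd] at h1 h2
      exact asymP d x y h1 h2
  by_cases hXY : Y = X
  · left; rw [hXY]
  · have h1 := hX.2 Y hY.1 hXY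
    have h2 := hY.2 X hX.1 (Ne.symm hXY)
    rcases h1 with hlt | ⟨heq, j, hj, hjk⟩
    · rcases h2 with hlt' | ⟨heq', _⟩
      · omega
      · omega
    rcases h2 with hlt' | ⟨heq', j', hj', hjk'⟩
    · omega
    rcases lt_trichotomy j j' with hlt | heqj | hlt
    · have he := hjk' j hlt
      rw [he] at hj
      exact (optSP_not_both (asymP j) _ _ hj hj).elim
    · subst heqj
      by_cases hji : j = i
      · subst hji; exact Or.inr hj
      · have cond : ∀ x y, P j x y → Function.update P i P' j y x → False := by
          intro x y a1 a2
          rw [Function.update_of_ne hji] at a2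
          exact asymP j x y a1 a2
        exact (optSP_not_both cond _ _ hj hj').elim
    · have he := hjk j' hlt
      rw [he] at hj'
      exact (optSP_not_both (asymU j') _ _ hj' hj').elim
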